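/- Let T be a balanced subdivision of a star with ℓ ≥ 2 legs and depth t ≥ 1 (so T has tℓ + 1 vertices). Then the number of linear orders on the vertex set of T that are single-peaked on T is at least (ℓ!)^t. -/

import Mathlib

/-- `x` appears strictly before `y` in the list `l`. -/
def listBefore {V : Type*} (l : List V) (x y : V) : Prop :=
  ∃ i j : Fin l.length, i < j ∧ l.get i = x ∧ l.get j = y

/-- The restriction of `r` to the finite set `X` is single peaked with respect to the
restriction of `r'` to `X`. -/
def SinglePeakedOn {V : Type*} (X : Finset V) (r r' : V → V → Prop) : Prop :=
  ∀ p ∈ X, (∀ x ∈ X, x ≠ p → r p x) →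
    ∀ x ∈ X, ∀ y ∈ X, ((r' p x ∧ r' x y) ∨ (r' y x ∧ r' x p)) → r x y

/-- A linear order `r` on the vertex set of `G` is single peaked on the tree `G`. -/
def SinglePeakedOnTree {V : Type*} [DecidableEq V] (G : SimpleGraph V)
    (r : V → V → Prop) : Prop :=
  ∀ l : List V, l.Nodup → l.Chain' G.Adj →
    SinglePeakedOn l.toFinset r (listBefore l)

/-- The balanced subdivision of a star with `ℓ` legs and depth `t`: the vertex `none`
is the center, and `some (i, j)` is the `(j+1)`-st vertex on the `i`-th leg. -/
def starSubdivision (ℓ t : ℕ) : SimpleGraph (Option (Fin ℓ × Fin t)) :=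
  SimpleGraph.fromRel (fun a b =>
    (a = none ∧ ∃ p : Fin ℓ × Fin t, b = some p ∧ (p.2 : ℕ) = 0) ∨
    (∃ p q : Fin ℓ × Fin t, a = some p ∧ b = some q ∧ p.1 = q.1 ∧
      (q.2 : ℕ) = (p.2 : ℕ) + 1))


namespace StarSPAux

variable {ℓ t : ℕ}

/-- Level of a vertex: distance from the center. -/
def lv : Option (Fin ℓ × Fin t) → ℕ
  | none => 0
  | some p => (p.2 : ℕ) + 1

/-- Rank function for the order determined by permutations `f`. -/
def rk (f : Fin t → Equiv.Perm (Fin ℓ)) : Option (Fin ℓ × Fin t) → ℕ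
  | none => 0
  | some p => (p.2 : ℕ) * ℓ + ((f p.2) p.1 : ℕ) + 1

lemma rk_lt_of_lv_lt (f : Fin t → Equiv.Perm (Fin ℓ)) {x y : Option (Fin ℓ × Fin t)}
    (h : lv x < lv y) : rk f x < rk f y := by
  match x, y with
  | x, none => simp only [lv] at h; omega
  | none, some q => simp [rk]
  | some p, some q =>
      simp only [lv] at h
      have h1 : ((f p.2) p.1 : ℕ) < ℓ := ((f p.2) p.1).isLt
      have h2 : (p.2 : ℕ) + 1 ≤ (q.2 : ℕ) := by omega
      simp only [rk]
      have h3 : ((p.2 : ℕ) + 1) * ℓ ≤ (q.2 : ℕ) * ℓ := Nat.mul_le_mul_right _ h2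
      nlinarith

lemma rk_inj (f : Fin t → Equiv.Perm (Fin ℓ)) :
    Function.Injective (rk (ℓ := ℓ) (t := t) f) := by
  intro x y h
  have hlv : lv x = lv y := by
    rcases lt_trichotomy (lv x) (lv y) with h' | h' | h'
    · have := rk_lt_of_lv_lt f h'; omega
    · exact h'
    · have := rk_lt_of_lv_lt f h'; omega
  match x, y with
  | none, none => rfl
  | none, some q => simp [lv] at hlv
  | some p, none => simp [lv] at hlv
  | some ⟨i, j⟩, some ⟨i', j'⟩ =>
      simp only [lv] at hlv
      have hj : j = j' := Fin.ext (by omega)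
      subst hj
      simp only [rk] at h
      have hval : ((f j) i : ℕ) = ((f j) i' : ℕ) := by omega
      have : (f j) i = (f j) i' := Fin.ext hval
      have : i = i' := (f j).injective this
      subst this; rfl

lemma adj_lv {x y : Option (Fin ℓ × Fin t)} (h : (starSubdivision ℓ t).Adj x y) :
    lv x + 1 = lv y ∨ lv y + 1 = lv x := by
  rw [starSubdivision, SimpleGraph.fromRel_adj] at h
  obtain ⟨-, h | h⟩ := h
  · rcases h with ⟨hx, p, hy, hp⟩ | ⟨p, q, hx, hy, -, hpq⟩
    · subst hx; subst hy; left; simp [lv, hp]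
    · subst hx; subst hy; left; simp only [lv]; omega
  · rcases h with ⟨hy, p, hx, hp⟩ | ⟨p, q, hy, hx, -, hpq⟩
    · subst hx; subst hy; right; simp [lv, hp]
    · subst hx; subst hy; right; simp only [lv]; omega

lemma adj_lower {x y : Option (Fin ℓ × Fin t)} (hxy : (starSubdivision ℓ t).Adj x y)
    (hy : lv y < lv x) :
    ∃ p : Fin ℓ × Fin t, x = some p ∧
      (((p.2 : ℕ) = 0 ∧ y = none) ∨
        (∃ q : Fin ℓ × Fin t, y = some q ∧ q.1 = p.1 ∧ (p.2 : ℕ) = (q.2 : ℕ) + 1)) := by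
  rw [starSubdivision, SimpleGraph.fromRel_adj] at hxy
  obtain ⟨-, h | h⟩ := hxy
  · rcases h with ⟨hx, p, hy', hp⟩ | ⟨p, q, hx, hy', -, hpq⟩
    · subst hx; subst hy'; simp [lv] at hy
    · subst hx; subst hy'; simp only [lv] at hy; omega
  · rcases h with ⟨hy', p, hx, hp⟩ | ⟨q, p, hy', hx, hq1, hpq⟩
    · exact ⟨p, hx, Or.inl ⟨hp, hy'⟩⟩
    · exact ⟨p, hx, Or.inr ⟨q, hy', hq1, hpq⟩⟩

lemma adj_lower_unique {x y z : Option (Fin ℓ × Fin t)}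
    (hxy : (starSubdivision ℓ t).Adj x y) (hxz : (starSubdivision ℓ t).Adj x z)
    (hy : lv y < lv x) (hz : lv z < lv x) : y = z := by
  obtain ⟨p, hx, hcy⟩ := adj_lower hxy hy
  obtain ⟨p', hx', hcz⟩ := adj_lower hxz hz
  rw [hx] at hx'
  have hpp : p = p' := Option.some.inj hx'
  subst hpp
  rcases hcy with ⟨hp0, hy0⟩ | ⟨q, hyq, hq1, hq2⟩ <;>
    rcases hcz with ⟨hp0', hz0⟩ | ⟨q', hzq, hq1', hq2'⟩
  · rw [hy0, hz0]
  · omega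
  · omega
  · rw [hyq, hzq]
    have : q = q' := by
      have h2 : q.2 = q'.2 := Fin.ext (by omega)
      have h1 : q.1 = q'.1 := by rw [hq1, hq1']
      exact Prod.ext h1 h2
    rw [this]

lemma adj_rk_lt_iff (f : Fin t → Equiv.Perm (Fin ℓ)) {x y : Option (Fin ℓ × Fin t)}
    (h : (starSubdivision ℓ t).Adj x y) : rk f x < rk f y ↔ lv x < lv y := by
  rcases adj_lv h with h' | h'
  · exact iff_of_true (rk_lt_of_lv_lt f (by omega)) (by omega)
  · have := rk_lt_of_lv_lt f (show lv y < lv x by omega)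
    exact iff_of_false (by omega) (by omega)

lemma accum {s : ℕ → ℕ} {a m : ℕ} (h : ∀ j, a ≤ j → j + 1 ≤ m → s j < s (j + 1)) :
    ∀ b, a < b → b ≤ m → s a < s b := by
  intro b
  induction b with
  | zero => omega
  | succ b ih =>
    intro hb hbm
    rcases Nat.lt_or_ge a b with h' | h'
    · exact (ih h' (by omega)).trans (h b (by omega) hbm)
    · have : a = b := by omega
      subst this; exact h a le_rfl hbm

end StarSPAux

namespace StarSPAux

lemma chain_spo (f : Fin t → Equiv.Perm (Fin ℓ)) (l : List (Option (Fin ℓ × Fin t)))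
    (hd : l.Nodup) (hc : l.Chain' (starSubdivision ℓ t).Adj) :
    SinglePeakedOn l.toFinset (fun a b => rk f a < rk f b) (listBefore l) := by
  intro p hp htop x hx y hy hcase
  set n := l.length with hn
  set w : ℕ → Option (Fin ℓ × Fin t) := fun k => if h : k < n then l[k]'h else none with hw
  set s : ℕ → ℕ := fun k => rk f (w k) with hs
  have hwget : ∀ (i : Fin l.length), w i.val = l.get i := by
    intro i
    simp only [hw, dif_pos i.isLt, List.get_eq_getElem]
    exact dif_pos i.isLt
  have hadj : ∀ k, k + 1 < n → (starSubdivision ℓ t).Adj (w k) (w (k + 1)) := by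
    intro k hk
    have := List.isChain_iff_getElem.mp hc k (by omega)
    simpa only [hw, dif_pos (show k < n by omega), dif_pos hk, List.get_eq_getElem]
      using this
  have hne : ∀ j k, j < n → k < n → j ≠ k → w j ≠ w k := by
    intro j k hj hk hjk
    simp only [hw, dif_pos hj, dif_pos hk]
    intro hEq
    exact hjk ((List.Nodup.getElem_inj_iff hd).mp hEq)
  have hsne : ∀ k, k + 1 < n → s k ≠ s (k + 1) := by
    intro k hk h
    exact hne k (k + 1) (by omega) hk (by omega) (rk_inj f h)
  have hnomax : ∀ j, j + 2 < n → s j < s (j + 1) → s (j + 2) < s (j + 1) → False := by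
    intro j hj h1 h2
    have a1 := hadj j (by omega)
    have a2 := hadj (j + 1) (by omega)
    have a2' : (starSubdivision ℓ t).Adj (w (j + 2)) (w (j + 1)) := by
      have : j + 1 + 1 = j + 2 := by omega
      rw [this] at a2
      exact a2.symm
    have lv1 : lv (w j) < lv (w (j + 1)) := (adj_rk_lt_iff f a1).mp h1
    have lv2 : lv (w (j + 2)) < lv (w (j + 1)) := (adj_rk_lt_iff f a2').mp h2
    have := adj_lower_unique a1.symm a2'.symm lv1 lv2
    exact hne j (j + 2) (by omega) (by omega) (by omega) this
  have hstep : ∀ j, j + 2 < n → s j < s (j + 1) → s (j + 1) < s (j + 2) := by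
    intro j hj h1
    rcases lt_trichotomy (s (j + 1)) (s (j + 2)) with h | h | h
    · exact h
    · have : j + 1 + 1 = j + 2 := by omega
      exact absurd (this ▸ h) (hsne (j + 1) (by omega))
    · exact (hnomax j hj h1 h).elim
  have hstep' : ∀ j, j + 2 < n → s (j + 2) < s (j + 1) → s (j + 1) < s j := by
    intro j hj h2
    rcases lt_trichotomy (s (j + 1)) (s j) with h | h | h
    · exact h
    · have : s j ≠ s (j + 1) := hsne j (by omega)
      exact absurd h.symm this
    · exact (hnomax j hj h h2).elim
  have hinc : ∀ k, k + 1 < n → s k < s (k + 1) →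
      ∀ j, k ≤ j → j + 1 < n → s j < s (j + 1) := by
    intro k hk hbase j hkj
    induction j, hkj using Nat.le_induction with
    | base => exact fun _ => hbase
    | succ j hkj ih =>
      intro hj2
      have h1 : s j < s (j + 1) := ih (by omega)
      have := hstep j (by omega) h1
      have e : j + 1 + 1 = j + 2 := by omega
      rw [e]; exact this
  have hdec : ∀ k, k + 1 < n → s (k + 1) < s k → ∀ j, j ≤ k → s (j + 1) < s j := by
    intro k hk hbase
    have key : ∀ d j, j + d = k → s (j + 1) < s j := by
      intro d
      induction d with
      | zero =>
        intro j hj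
        have : j = k := by omega
        subst this; exact hbase
      | succ d ih =>
        intro j hj
        have h2 := ih (j + 1) (by omega)
        have e : j + 1 + 1 = j + 2 := by omega
        rw [e] at h2
        exact hstep' j (by omega) h2
    intro j hj
    exact key (k - j) j (by omega)
  have hmem : ∀ k (hk : k < n), w k ∈ l.toFinset := by
    intro k hk
    simp only [hw, dif_pos hk]
    exact List.mem_toFinset.mpr (l.getElem_mem hk)
  obtain hA | hB := hcase
  · -- p before x before y
    obtain ⟨⟨ip, ix1, h1, hgp, hgx1⟩, ⟨ix2, iy, h2, hgx2, hgy⟩⟩ := hA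
    have hxx : ix1 = ix2 := (List.Nodup.get_inj_iff hd).mp (hgx1.trans hgx2.symm)
    subst hxx
    have hpw : w ip.val = p := (hwget ip).trans hgp
    have hxw : w ix1.val = x := (hwget ix1).trans hgx1
    have hyw : w iy.val = y := (hwget iy).trans hgy
    have hlt1 : (ip : ℕ) < ix1 := h1
    have hlt2 : (ix1 : ℕ) < iy := h2
    have hiy : (iy : ℕ) < n := iy.isLt
    have hbase : s ip.val < s (ip.val + 1) := by
      have hk : ip.val + 1 < n := by omega
      have hzne : w (ip.val + 1) ≠ p := by
        rw [← hpw]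
        exact hne (ip.val + 1) ip.val hk (by omega) (by omega)
      have := htop _ (hmem _ hk) hzne
      simp only [hs, hpw]
      exact this
    have hmono := hinc ip.val (by omega) hbase
    have : s ix1.val < s iy.val := by
      refine accum (m := iy.val) (fun j hj hj2 => hmono j (by omega) (by omega)) iy.val ?_ le_rfl
      omega
    simpa only [hs, hxw, hyw] using this
  · -- y before x before p
    obtain ⟨⟨iy, ix1, h2, hgy, hgx1⟩, ⟨ix2, ip, h1, hgx2, hgp⟩⟩ := hB
    have hxx : ix1 = ix2 := (List.Nodup.get_inj_iff hd).mp (hgx1.trans hgx2.symm)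
    subst hxx
    have hpw : w ip.val = p := (hwget ip).trans hgp
    have hxw : w ix1.val = x := (hwget ix1).trans hgx1
    have hyw : w iy.val = y := (hwget iy).trans hgy
    have hlt1 : (ix1 : ℕ) < ip := h1
    have hlt2 : (iy : ℕ) < ix1 := h2
    have hip : (ip : ℕ) < n := ip.isLt
    have hbase : s (ip.val - 1 + 1) < s (ip.val - 1) := by
      have e : ip.val - 1 + 1 = ip.val := by omega
      rw [e]
      have hzne : w (ip.val - 1) ≠ p := by
        rw [← hpw]
        exact hne (ip.val - 1) ip.val (by omega) (by omega) (by omega)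
      have := htop _ (hmem _ (by omega)) hzne
      simp only [hs, hpw]
      exact this
    have hdown := hdec (ip.val - 1) (by omega) hbase
    -- decreasing: for all j ≤ ip - 1, s (j+1) < s j
    have key : s ix1.val < s iy.val := by
      have hrev : ∀ j, 0 ≤ j → j + 1 ≤ ip.val →
          s (ip.val - j) < s (ip.val - (j + 1)) := by
        intro j _ hj
        have := hdown (ip.val - j - 1) (by omega)
        have e : ip.val - j - 1 + 1 = ip.val - j := by omega
        rw [e] at this
        have e2 : ip.val - (j + 1) = ip.val - j - 1 := by omega
        rw [e2]
        exact this
      have := accum (s := fun d => s (ip.val - d)) (a := ip.val - ix1.val)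
        (m := ip.val) (fun j hj hj2 => hrev j (by omega) hj2)
        (ip.val - iy.val) (by omega) (by omega)
      have e1 : ip.val - (ip.val - ix1.val) = ix1.val := by omega
      have e2 : ip.val - (ip.val - iy.val) = iy.val := by omega
      simp only [e1, e2] at this
      exact this
    simpa only [hs, hxw, hyw] using key
end StarSPAux

namespace StarSPAux

lemma rk_sto (f : Fin t → Equiv.Perm (Fin ℓ)) :
    IsStrictTotalOrder (Option (Fin ℓ × Fin t)) (fun a b => rk f a < rk f b) where
  trichotomous := by
    intro a b
    rcases lt_trichotomy (rk f a) (rk f b) with h | h | h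
    · exact fun h1 _ => absurd h h1
    · exact fun _ _ => rk_inj f h
    · exact fun _ h2 => absurd h h2
  irrefl := fun a => lt_irrefl _
  trans := fun a b c hab hbc => lt_trans hab hbc

lemma perm_eq_of_compat {ℓ : ℕ} {σ τ : Equiv.Perm (Fin ℓ)}
    (h : ∀ i i', σ i < σ i' ↔ τ i < τ i') : σ = τ := by
  have hmono : StrictMono (fun a => τ (σ.symm a)) := by
    intro a b hab
    have h1 : σ (σ.symm a) < σ (σ.symm b) := by simpa using hab
    exact (h _ _).mp h1
  have hrange : Set.range (fun a => τ (σ.symm a)) = Set.range (id : Fin ℓ → Fin ℓ) := by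
    rw [Set.range_id]
    exact Set.range_eq_univ.mpr fun a => ⟨σ (τ.symm a), by simp⟩
  haveI : WellFoundedLT (Fin ℓ) := inferInstance
  have hid : (fun a => τ (σ.symm a)) = (id : Fin ℓ → Fin ℓ) :=
    (StrictMono.range_inj (β := Fin ℓ) (γ := Fin ℓ) hmono strictMono_id).mp hrange
  ext i
  have h2 := congrFun hid (σ i)
  simp only [Equiv.symm_apply_apply, id_eq] at h2
  exact congrArg Fin.val h2.symm

end StarSPAux

/-- The number of linear orders on the vertex set of a balanced subdivision of a star
with `ℓ ≥ 2` legs and depth `t ≥ 1` that are single peaked on it is at least `(ℓ!)^t`. -/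
theorem starSubdivision_singlePeaked_count
    (ℓ t : ℕ) (hℓ : 2 ≤ ℓ) (ht : 1 ≤ t) :
    (Nat.factorial ℓ) ^ t ≤
      Nat.card {r : Option (Fin ℓ × Fin t) → Option (Fin ℓ × Fin t) → Prop //
        IsStrictTotalOrder (Option (Fin ℓ × Fin t)) r ∧
        SinglePeakedOnTree (starSubdivision ℓ t) r} := by
  classical
  set S := {r : Option (Fin ℓ × Fin t) → Option (Fin ℓ × Fin t) → Prop //
        IsStrictTotalOrder (Option (Fin ℓ × Fin t)) r ∧
        SinglePeakedOnTree (starSubdivision ℓ t) r} with hS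
  have hSPT : ∀ f : Fin t → Equiv.Perm (Fin ℓ),
      SinglePeakedOnTree (starSubdivision ℓ t)
        (fun a b => StarSPAux.rk f a < StarSPAux.rk f b) :=
    fun f l hd hc => StarSPAux.chain_spo f l hd hc
  let F : (Fin t → Equiv.Perm (Fin ℓ)) → S :=
    fun f => ⟨fun a b => StarSPAux.rk f a < StarSPAux.rk f b,
      StarSPAux.rk_sto f, hSPT f⟩
  have hFinj : Function.Injective F := by
    intro f g hfg
    have hrel : (fun a b => StarSPAux.rk f a < StarSPAux.rk f b) =
        (fun a b => StarSPAux.rk g a < StarSPAux.rk g b) :=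
      congrArg Subtype.val hfg
    funext j
    apply StarSPAux.perm_eq_of_compat
    intro i i'
    have h0 := congrFun (congrFun hrel (some (i, j))) (some (i', j))
    simp only [StarSPAux.rk] at h0
    have h1 : ((j : ℕ) * ℓ + ((f j) i : ℕ) + 1 < (j : ℕ) * ℓ + ((f j) i' : ℕ) + 1) ↔
        ((j : ℕ) * ℓ + ((g j) i : ℕ) + 1 < (j : ℕ) * ℓ + ((g j) i' : ℕ) + 1) :=
      Iff.of_eq h0
    rw [Fin.lt_def, Fin.lt_def]
    constructor
    · intro hlt
      have := h1.mp (by omega)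
      omega
    · intro hlt
      have := h1.mpr (by omega)
      omega
  have hcard : Nat.card (Fin t → Equiv.Perm (Fin ℓ)) = (Nat.factorial ℓ) ^ t := by
    simp [Nat.card_eq_fintype_card, Fintype.card_fun, Fintype.card_perm, Fintype.card_fin]
  calc (Nat.factorial ℓ) ^ t = Nat.card (Fin t → Equiv.Perm (Fin ℓ)) := hcard.symm
    _ ≤ Nat.card S := Nat.card_le_card_of_injective F hFinj
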